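/- Let $\mathbb{F}_q$ be a finite field and let $\Lambda_0 = \bigcup_{n \geq 1} \mathbb{F}_{q^n}[[X,Y]]$ (the union of two-variable power series rings over all finite extensions of $\mathbb{F}_q$ inside a fixed algebraic closure), and let $\Lambda = \Lambda_0[X^{-1}, Y^{-1}]$. Then $\Lambda$ is a principal ideal domain. -/

import Mathlib

open MvPowerSeries Finsupp

namespace Stmt8Aux
variable {K : Type*} [Field K]

local notation "B" => MvPowerSeries (Fin 2) K

lemma fin2_eq (m : Fin 2 →₀ ℕ) : m = single 0 (m 0) + single 1 (m 1) := by
  ext i; fin_cases i <;> simp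

lemma fin2_ext {m m' : Fin 2 →₀ ℕ} (h0 : m 0 = m' 0) (h1 : m 1 = m' 1) : m = m' := by
  ext i; fin_cases i <;> simpa

noncomputable def Tsh (d : ℕ) (f : B) : B := fun m => coeff (m + single 1 d) f

lemma coeff_Tsh (d : ℕ) (f : B) (m : Fin 2 →₀ ℕ) :
    coeff m (Tsh d f) = coeff (m + single 1 d) f := rfl

lemma Tsh_sub (d : ℕ) (f g : B) : Tsh d (f - g) = Tsh d f - Tsh d g := by
  ext m; simp only [coeff_Tsh, map_sub]

lemma coeff_Ypow_mul (d : ℕ) (z : B) (m : Fin 2 →₀ ℕ) :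
    coeff m ((X 1 : B) ^ d * z) = if d ≤ m 1 then coeff (m - single 1 d) z else 0 := by
  rw [X_pow_eq, coeff_monomial_mul]
  simp [Finsupp.single_le_iff]

lemma coeff_Xpow_mul (a : ℕ) (z : B) (m : Fin 2 →₀ ℕ) :
    coeff m ((X 0 : B) ^ a * z) = if a ≤ m 0 then coeff (m - single 0 a) z else 0 := by
  rw [X_pow_eq, coeff_monomial_mul]
  simp [Finsupp.single_le_iff]

lemma Tsh_mul_Ypow (d : ℕ) (z : B) : Tsh d (z * (X 1 : B) ^ d) = z := by
  ext m
  rw [coeff_Tsh, X_pow_eq, coeff_mul_monomial,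
    if_pos (self_le_add_left (single 1 d) m), add_tsub_cancel_right, mul_one]

/-- `P k w` : the `X`-order of `w` is at least `k`. -/
def Pf (k : ℕ) (w : B) : Prop := ∀ m : Fin 2 →₀ ℕ, m 0 < k → coeff m w = 0

lemma Pf_mul_left (k : ℕ) (z w : B) (hw : Pf k w) : Pf k (z * w) := by
  intro m hm
  rw [coeff_mul]
  refine Finset.sum_eq_zero fun p hp => ?_
  rw [Finset.HasAntidiagonal.mem_antidiagonal] at hp
  have h2 : p.2 0 < k := by
    have : p.1 0 + p.2 0 = m 0 := by rw [← Finsupp.add_apply, hp]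
    omega
  rw [hw p.2 h2, mul_zero]

lemma Pf_Tsh (d k : ℕ) (w : B) (hw : Pf k w) : Pf k (Tsh d w) := by
  intro m hm
  rw [coeff_Tsh]
  exact hw _ (by simpa using hm)

lemma Pf_sub (k : ℕ) (w w' : B) (hw : Pf k w) (hw' : Pf k w') : Pf k (w - w') := by
  intro m hm; rw [map_sub, hw m hm, hw' m hm, sub_zero]

lemma Pf_neg (k : ℕ) (w : B) (hw : Pf k w) : Pf k (-w) := by
  intro m hm; rw [map_neg, hw m hm, neg_zero]

/-- multiplication by something all of whose `X⁰`-row coefficients vanish raises X-order. -/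
lemma Pf_mul_raise (k : ℕ) (w a : B) (ha : ∀ m : Fin 2 →₀ ℕ, m 0 = 0 → coeff m a = 0)
    (hw : Pf k w) : Pf (k + 1) (w * a) := by
  intro m hm
  rw [coeff_mul]
  refine Finset.sum_eq_zero fun p hp => ?_
  rw [Finset.HasAntidiagonal.mem_antidiagonal] at hp
  have hsum : p.1 0 + p.2 0 = m 0 := by rw [← Finsupp.add_apply, hp]
  rcases Nat.eq_zero_or_pos (p.2 0) with h0 | h0
  · rw [ha p.2 h0, mul_zero]
  · have : p.1 0 < k := by omega
    rw [hw p.1 this, zero_mul]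

/-- Weierstrass division, existence. -/
theorem wdiv_exists (π : B) (d : ℕ)
    (hπlow : ∀ j < d, coeff (single 1 j) π = 0)
    (hπd : coeff (single 1 d) π ≠ 0) (g : B) :
    ∃ q r : B, g = q * π + r ∧ ∀ m : Fin 2 →₀ ℕ, d ≤ m 1 → coeff m r = 0 := by
  classical
  set h : B := Tsh d π with hh
  set a : B := π - (X 1 : B) ^ d * h with hadef
  have hπdec : π = a + (X 1 : B) ^ d * h := by rw [hadef]; ring
  -- the X⁰-row of `a` vanishes
  have ha0 : ∀ m : Fin 2 →₀ ℕ, m 0 = 0 → coeff m a = 0 := by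
    intro m hm0
    have hm : m = single 1 (m 1) := by
      refine fin2_ext ?_ ?_ <;> simp [hm0]
    rw [hadef, map_sub, coeff_Ypow_mul]
    by_cases hd : d ≤ m 1
    · rw [if_pos hd, coeff_Tsh, tsub_add_cancel_of_le (Finsupp.single_le_iff.mpr hd), sub_self]
    · rw [if_neg hd, sub_zero, hm]
      exact hπlow _ (by omega)
  -- `h` has invertible constant coefficient
  have hconst : constantCoeff h = coeff (single 1 d) π := by
    rw [← coeff_zero_eq_constantCoeff, coeff_Tsh, zero_add]
  have hunit : IsUnit (constantCoeff h) := by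
    rw [hconst]; exact (Units.mk0 _ hπd).isUnit
  set hi : B := invOfUnit h hunit.unit with hhi
  have hmulinv : h * hi = 1 := mul_invOfUnit h hunit.unit hunit.unit_spec.symm
  -- successive approximations
  set u : ℕ → B := fun k => Nat.rec 0 (fun _ w => hi * (Tsh d g - Tsh d (w * a))) k with hu
  have hu0 : u 0 = 0 := rfl
  have huS : ∀ k, u (k + 1) = hi * (Tsh d g - Tsh d (u k * a)) := fun k => rfl
  have hdiff : ∀ k, Pf k (u (k + 1) - u k) := by
    intro k
    induction k with
    | zero => intro m hm; omega
    | succ k ih =>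
        have heq : u (k + 1 + 1) - u (k + 1) = hi * Tsh d ((u k - u (k + 1)) * a) := by
          rw [huS (k + 1), huS k, sub_mul, Tsh_sub]
          ring
        rw [heq]
        have hks : Pf k (u k - u (k + 1)) := by
          have := Pf_neg _ _ ih
          rwa [neg_sub] at this
        exact Pf_mul_left _ _ _ (Pf_Tsh _ _ _ (Pf_mul_raise _ _ _ ha0 hks))
  have hstab : ∀ (m : Fin 2 →₀ ℕ) (k : ℕ), m 0 + 1 ≤ k → coeff m (u k) = coeff m (u (m 0 + 1)) := by
    intro m k hk
    induction k, hk using Nat.le_induction with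
    | base => rfl
    | succ k hk ih =>
        have hz : coeff m (u (k + 1) - u k) = 0 := hdiff k m (by omega)
        rw [map_sub, sub_eq_zero] at hz
        rw [hz, ih]
  set q : B := (fun m => coeff m (u (m 0 + 1)) : (Fin 2 →₀ ℕ) → K) with hq
  have hqco : ∀ m : Fin 2 →₀ ℕ, coeff m q = coeff m (u (m 0 + 1)) := fun m => rfl
  have hagree : ∀ i : ℕ, Pf i (q - u i) := by
    intro i m hm
    rw [map_sub, hqco, hstab m i (by omega), sub_self]
  have hqfix : q = hi * (Tsh d g - Tsh d (q * a)) := by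
    ext m
    have h1 : Pf (m 0 + 1) ((u (m 0) - q) * a) := by
      refine Pf_mul_raise _ _ _ ha0 ?_
      have := Pf_neg _ _ (hagree (m 0))
      rwa [neg_sub] at this
    have h2 : coeff m (hi * Tsh d ((u (m 0) - q) * a)) = 0 :=
      Pf_mul_left _ _ _ (Pf_Tsh _ _ _ h1) m (by omega)
    have heq : hi * (Tsh d g - Tsh d (q * a)) =
        u (m 0 + 1) + hi * Tsh d ((u (m 0) - q) * a) := by
      rw [huS (m 0), sub_mul, Tsh_sub]
      ring
    rw [hqco, heq, map_add, h2, add_zero]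
  refine ⟨q, g - q * π, by ring, ?_⟩
  -- show the remainder has all rows ≥ d vanishing
  have hTr : Tsh d (g - q * π) = 0 := by
    have hqπ : q * π = q * a + (q * h) * (X 1 : B) ^ d := by
      rw [hπdec]; ring
    have hT1 : Tsh d (g - q * π) = Tsh d g - Tsh d (q * a) - q * h := by
      rw [hqπ, ← sub_sub, Tsh_sub, Tsh_sub, Tsh_mul_Ypow]
    have hhq : h * q = Tsh d g - Tsh d (q * a) := by
      conv_lhs => rw [hqfix]
      rw [← mul_assoc, hmulinv, one_mul]
    rw [hT1, ← hhq]
    ring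
  intro m hm
  have hle : single 1 d ≤ m := Finsupp.single_le_iff.mpr hm
  have : coeff m (g - q * π) = coeff (m - single 1 d) (Tsh d (g - q * π)) := by
    rw [coeff_Tsh, tsub_add_cancel_of_le hle]
  rw [this, hTr, map_zero]

/-- Weierstrass division, uniqueness (homogeneous form). -/
theorem wdiv_zero (π : B) (d : ℕ)
    (hπlow : ∀ j < d, coeff (single 1 j) π = 0)
    (hπd : coeff (single 1 d) π ≠ 0) {q r : B}
    (hr : ∀ m : Fin 2 →₀ ℕ, d ≤ m 1 → coeff m r = 0)
    (heq : q * π + r = 0) : q = 0 ∧ r = 0 := by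
  classical
  have hq : q = 0 := by
    by_contra hq0
    obtain ⟨m₀, hm₀⟩ : ∃ m₀, coeff m₀ q ≠ 0 := by
      by_contra hall
      push_neg at hall
      exact hq0 (MvPowerSeries.ext fun m => by rw [hall m, map_zero])
    have hex : ∃ i, ∃ j, coeff (single 0 i + single 1 j) q ≠ 0 :=
      ⟨m₀ 0, m₀ 1, by rwa [← fin2_eq m₀]⟩
    set i := Nat.find hex with hi
    have hex2 : ∃ j, coeff (single 0 i + single 1 j) q ≠ 0 := Nat.find_spec hex
    set j' := Nat.find hex2 with hj'
    have hqij : coeff (single 0 i + single 1 j') q ≠ 0 := Nat.find_spec hex2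
    have hrowlt : ∀ i' < i, ∀ j'', coeff (single 0 i' + single 1 j'') q = 0 := by
      intro i' hi' j''
      have := Nat.find_min hex hi'
      push_neg at this
      exact this j''
    have hcollt : ∀ j'' < j', coeff (single 0 i + single 1 j'') q = 0 := by
      intro j'' hj''
      have := Nat.find_min hex2 hj''
      simpa using this
    -- evaluate the coefficient of `X^i Y^(j'+d)` in `q * π`
    set M : Fin 2 →₀ ℕ := single 0 i + single 1 (j' + d) with hM
    have hM0 : M 0 = i := by simp [hM]
    have hM1 : M 1 = j' + d := by simp [hM]
    have hrM : coeff M r = 0 := hr M (by omega)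
    have hqπ : coeff M (q * π) = 0 := by
      have := congrArg (coeff M) heq
      rw [map_add, map_zero, hrM, add_zero] at this
      exact this
    rw [coeff_mul] at hqπ
    have hsum : ∑ p ∈ Finset.HasAntidiagonal.antidiagonal M, coeff p.1 q * coeff p.2 π =
        coeff (single 0 i + single 1 j') q * coeff (single 1 d) π := by
      refine Finset.sum_eq_single (single 0 i + single 1 j', single 1 d) ?_ ?_
      · intro p hp hne
        rw [Finset.HasAntidiagonal.mem_antidiagonal] at hp
        have h0 : p.1 0 + p.2 0 = i := by
          rw [← Finsupp.add_apply, hp]; exact hM0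
        have h1 : p.1 1 + p.2 1 = j' + d := by
          rw [← Finsupp.add_apply, hp]; exact hM1
        rcases lt_or_eq_of_le (Nat.le.intro h0 : p.1 0 ≤ i) with hlt | heqi
        · have hz : coeff p.1 q = 0 := by
            rw [fin2_eq p.1]; exact hrowlt _ hlt _
          rw [hz, zero_mul]
        · have hp20 : p.2 0 = 0 := by omega
          have hp2 : p.2 = single 1 (p.2 1) := fin2_ext (by simp [hp20]) (by simp)
          rcases lt_trichotomy (p.1 1) j' with hlt1 | heq1 | hgt1
          · have hz : coeff p.1 q = 0 := by
              have : p.1 = single 0 i + single 1 (p.1 1) := fin2_ext (by simp [heqi]) (by simp)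
              rw [this]; exact hcollt _ hlt1
            rw [hz, zero_mul]
          · exfalso
            apply hne
            have h2d : p.2 1 = d := by omega
            have e1 : p.1 = single 0 i + single 1 j' := fin2_ext (by simp [heqi]) (by simp [heq1])
            have e2 : p.2 = single 1 d := by rw [hp2, h2d]
            exact Prod.ext e1 e2
          · have hz : coeff p.2 π = 0 := by
              rw [hp2]; exact hπlow _ (by omega)
            rw [hz, mul_zero]
      · intro hne
        exfalso
        apply hne
        rw [Finset.HasAntidiagonal.mem_antidiagonal]
        refine fin2_ext ?_ ?_ <;> simp [hM]
    rw [hsum] at hqπ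
    exact (mul_ne_zero hqij hπd) hqπ
  refine ⟨hq, ?_⟩
  rw [hq, zero_mul, zero_add] at heq
  exact heq

theorem strip_aux : ∀ (n : ℕ) (f : B) (m₀ : Fin 2 →₀ ℕ), coeff m₀ f ≠ 0 → m₀ 0 = n →
    ∃ (a : ℕ) (f' : B), f = (X 0 : B) ^ a * f' ∧ ∃ j, coeff (single 1 j) f' ≠ 0 := by
  intro n
  induction n using Nat.strong_induction_on with
  | _ n ih =>
    intro f m₀ hm₀ hn
    by_cases hrow : ∃ j, coeff (single 1 j) f ≠ 0
    · exact ⟨0, f, by rw [pow_zero, one_mul], hrow⟩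
    · push_neg at hrow
      set g : B := (fun m => coeff (m + single 0 1) f : (Fin 2 →₀ ℕ) → K) with hg
      have hgco : ∀ m : Fin 2 →₀ ℕ, coeff m g = coeff (m + single 0 1) f := fun _ => rfl
      have hfg : f = (X 0 : B) * g := by
        ext m
        have hXg : (X 0 : B) * g = (X 0 : B) ^ 1 * g := by rw [pow_one]
        rw [hXg, coeff_Xpow_mul]
        by_cases h1 : 1 ≤ m 0
        · rw [if_pos h1, hgco, tsub_add_cancel_of_le (Finsupp.single_le_iff.mpr h1)]
        · rw [if_neg h1]
          have hm0 : m 0 = 0 := by omega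
          have hm : m = single 1 (m 1) := fin2_ext (by simp [hm0]) (by simp)
          rw [hm]; exact hrow _
      have hm₀pos : 1 ≤ m₀ 0 := by
        by_contra h
        have hm0 : m₀ 0 = 0 := by omega
        have hm : m₀ = single 1 (m₀ 1) := fin2_ext (by simp [hm0]) (by simp)
        exact hm₀ (by rw [hm]; exact hrow (m₀ 1))
      have hgne : coeff (m₀ - single 0 1) g ≠ 0 := by
        rw [hgco, tsub_add_cancel_of_le (Finsupp.single_le_iff.mpr hm₀pos)]
        exact hm₀
      have hlt : (m₀ - single 0 1 : Fin 2 →₀ ℕ) 0 < n := by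
        rw [Finsupp.tsub_apply]
        simp only [Finsupp.single_eq_same]
        omega
      obtain ⟨a, f', hgf, hw⟩ := ih _ hlt g _ hgne rfl
      exact ⟨a + 1, f', by rw [hfg, hgf, pow_succ]; ring, hw⟩

theorem strip (f : B) (hf : f ≠ 0) :
    ∃ (a : ℕ) (f' : B), f = (X 0 : B) ^ a * f' ∧ ∃ j, coeff (single 1 j) f' ≠ 0 := by
  obtain ⟨m₀, hm₀⟩ : ∃ m₀, coeff m₀ f ≠ 0 := by
    by_contra hall
    push_neg at hall
    exact hf (MvPowerSeries.ext fun m => by rw [hall m, map_zero])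
  exact strip_aux (m₀ 0) f m₀ hm₀ rfl

lemma pow_fix_mul {c : K} {Q n : ℕ} (h : c ^ Q ^ n = c) (k : ℕ) : c ^ Q ^ (n * k) = c := by
  induction k with
  | zero => rw [Nat.mul_zero, pow_zero, pow_one]
  | succ k ih =>
      rw [Nat.mul_succ, pow_add, pow_mul, ih, h]

end Stmt8Aux

open Stmt8Aux in
/-- Let `F = 𝔽_q` be a finite field with algebraic closure `K`, and let
`Λ₀ ⊆ K[[X,Y]]` be the subring whose carrier is the union of the subrings
`𝔽_{q^n}[[X,Y]]` (power series all of whose coefficients satisfy `c^{q^n} = c` for some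
`n ≥ 1`).  Let `Λ = Λ₀[X⁻¹, Y⁻¹]` be the localization of `Λ₀` at the multiplicative
monoid generated by `X` and `Y`.  Then `Λ` is a principal ideal domain. -/
theorem stmt8 (F : Type*) [Field F] [Fintype F]
    (Λ₀ : Subring (MvPowerSeries (Fin 2) (AlgebraicClosure F)))
    (hΛ₀ : (Λ₀ : Set (MvPowerSeries (Fin 2) (AlgebraicClosure F))) =
      {f | ∃ n : ℕ, 1 ≤ n ∧ ∀ d,
        (MvPowerSeries.coeff d f) ^ (Fintype.card F) ^ n =
          MvPowerSeries.coeff d f})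
    (Λ : Type*) [CommRing Λ] [Algebra Λ₀ Λ]
    [IsLocalization
      (Submonoid.closure {x : Λ₀ |
        (x : MvPowerSeries (Fin 2) (AlgebraicClosure F)) = MvPowerSeries.X 0 ∨
        (x : MvPowerSeries (Fin 2) (AlgebraicClosure F)) = MvPowerSeries.X 1}) Λ] :
    IsDomain Λ ∧ IsPrincipalIdealRing Λ := by
  classical
  -- notation
  let K := AlgebraicClosure F
  let B := MvPowerSeries (Fin 2) K
  haveI : IsDomain (MvPowerSeries (Fin 2) K) := NoZeroDivisors.to_isDomain _
  set M : Submonoid Λ₀ := Submonoid.closure {x : Λ₀ |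
        (x : MvPowerSeries (Fin 2) (AlgebraicClosure F)) = MvPowerSeries.X 0 ∨
        (x : MvPowerSeries (Fin 2) (AlgebraicClosure F)) = MvPowerSeries.X 1} with hM
  haveI hloc : IsLocalization M Λ := by rw [hM]; infer_instance
  -- characteristic bookkeeping
  set Q := Fintype.card F with hQdef
  set p := ringChar F with hpdef
  haveI hchar : CharP F p := ringChar.charP F
  obtain ⟨s, hp, hcard⟩ := FiniteField.card F p
  haveI hfact : Fact p.Prime := ⟨hp⟩
  haveI : CharP K p := charP_of_injective_algebraMap (algebraMap F K).injective p
  haveI : ExpChar K p := ExpChar.prime hp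
  have hQ0 : Q ≠ 0 := Fintype.card_ne_zero
  -- membership characterization
  have hmem : ∀ f : MvPowerSeries (Fin 2) K, f ∈ Λ₀ ↔
      ∃ n : ℕ, 1 ≤ n ∧ ∀ d, (MvPowerSeries.coeff d f) ^ Q ^ n = MvPowerSeries.coeff d f := by
    intro f
    rw [← SetLike.mem_coe, hΛ₀]
    exact Iff.rfl
  -- Frobenius ring homs
  set Φ : ℕ → (MvPowerSeries (Fin 2) K →+* MvPowerSeries (Fin 2) K) :=
    fun n => MvPowerSeries.map (iterateFrobenius K p ((s : ℕ) * n)) with hΦdef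
  have hΦcoeff : ∀ (n : ℕ) (f : MvPowerSeries (Fin 2) K) (d : Fin 2 →₀ ℕ),
      MvPowerSeries.coeff d (Φ n f) = (MvPowerSeries.coeff d f) ^ Q ^ n := by
    intro n f d
    rw [hΦdef]
    rw [MvPowerSeries.coeff_map, iterateFrobenius_def, hQdef, hcard, ← pow_mul]
  have hmemfix : ∀ f : MvPowerSeries (Fin 2) K, f ∈ Λ₀ →
      ∃ n : ℕ, 1 ≤ n ∧ Φ n f = f := by
    intro f hf
    obtain ⟨n, hn1, hn⟩ := (hmem f).mp hf
    exact ⟨n, hn1, MvPowerSeries.ext fun d => by rw [hΦcoeff, hn d]⟩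
  have hfixmem : ∀ (n : ℕ) (f : MvPowerSeries (Fin 2) K), 1 ≤ n → Φ n f = f → f ∈ Λ₀ := by
    intro n f hn1 hfix
    refine (hmem f).mpr ⟨n, hn1, fun d => ?_⟩
    rw [← hΦcoeff n f d, hfix]
  have hfixpow : ∀ (n k : ℕ) (f : MvPowerSeries (Fin 2) K), Φ n f = f → Φ (n * k) f = f := by
    intro n k f hfix
    refine MvPowerSeries.ext fun d => ?_
    have hc : ∀ d', (MvPowerSeries.coeff d' f) ^ Q ^ n = MvPowerSeries.coeff d' f :=
      fun d' => by rw [← hΦcoeff n f d', hfix]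
    rw [hΦcoeff, pow_fix_mul (hc d) k]
  -- X and Y are in Λ₀
  have hXYmem : ∀ i : Fin 2, (MvPowerSeries.X i : MvPowerSeries (Fin 2) K) ∈ Λ₀ := by
    intro i
    refine (hmem _).mpr ⟨1, le_refl 1, fun d => ?_⟩
    rw [MvPowerSeries.coeff_X]
    split_ifs
    · rw [one_pow]
    · rw [zero_pow (pow_ne_zero 1 hQ0)]
  have hXne : ∀ i : Fin 2, (MvPowerSeries.X i : MvPowerSeries (Fin 2) K) ≠ 0 := by
    intro i h
    have := congrArg (MvPowerSeries.coeff (Finsupp.single i 1)) h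
    rw [MvPowerSeries.coeff_X, if_pos rfl, map_zero] at this
    exact one_ne_zero this
  set XΛ : Λ₀ := ⟨MvPowerSeries.X 0, hXYmem 0⟩ with hXΛ
  have hXM : XΛ ∈ M := Submonoid.subset_closure (Or.inl rfl)
  -- Λ is a domain
  have hMle : M ≤ nonZeroDivisors Λ₀ := by
    rw [hM]
    refine Submonoid.closure_le.mpr fun x hx => mem_nonZeroDivisors_of_ne_zero ?_
    intro h0
    rcases hx with h | h <;>
      · rw [h0] at h
        exact hXne _ h.symm
  haveI hdom : IsDomain Λ := IsLocalization.isDomain_of_le_nonZeroDivisors (S := Λ) hMle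
  refine ⟨hdom, ?_⟩
  apply IsPrincipalIdealRing.of_prime
  intro P hP
  by_cases hP0 : P = ⊥
  · rw [hP0]; exact ⟨⟨0, (Ideal.span_zero).symm⟩⟩
  set 𝔮 : Ideal Λ₀ := Ideal.comap (algebraMap Λ₀ Λ) P with h𝔮
  have hqprime : 𝔮.IsPrime := hP.comap _
  have hPmap : Ideal.map (algebraMap Λ₀ Λ) 𝔮 = P := IsLocalization.map_comap M Λ P
  have h𝔮0 : 𝔮 ≠ ⊥ := by
    intro h
    apply hP0
    rw [← hPmap, h, Ideal.map_bot]
  have hXq : XΛ ∉ 𝔮 := by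
    intro h
    have hu : IsUnit (algebraMap Λ₀ Λ XΛ) := IsLocalization.map_units Λ ⟨XΛ, hXM⟩
    exact hP.ne_top (P.eq_top_of_isUnit_mem h hu)
  -- strip powers of X inside 𝔮
  have hstripq : ∀ f : Λ₀, f ∈ 𝔮 → f ≠ 0 →
      ∃ (a : ℕ) (f' : Λ₀), f' ∈ 𝔮 ∧ (f : MvPowerSeries (Fin 2) K) =
        (MvPowerSeries.X 0) ^ a * (f' : MvPowerSeries (Fin 2) K) ∧
        ∃ j, MvPowerSeries.coeff (Finsupp.single 1 j) (f' : MvPowerSeries (Fin 2) K) ≠ 0 := by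
    intro f hfq hfne
    have hvalne : (f : MvPowerSeries (Fin 2) K) ≠ 0 := fun h => hfne (Subtype.ext h)
    obtain ⟨a, f', hfe, hw⟩ := strip (f : MvPowerSeries (Fin 2) K) hvalne
    obtain ⟨n, hn1, hfix⟩ := hmemfix (f : MvPowerSeries (Fin 2) K) f.2
    have hXfix : Φ n ((MvPowerSeries.X 0 : MvPowerSeries (Fin 2) K) ^ a) =
        (MvPowerSeries.X 0) ^ a := by
      rw [map_pow, hΦdef, MvPowerSeries.map_X]
    have hf'fix : Φ n f' = f' := by
      have h1 : (MvPowerSeries.X 0 : MvPowerSeries (Fin 2) K) ^ a * Φ n f' =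
          (MvPowerSeries.X 0) ^ a * f' := by
        conv_rhs => rw [← hfe, ← hfix, hfe]
        rw [map_mul, hXfix]
      exact mul_left_cancel₀ (pow_ne_zero a (hXne 0)) h1
    have hf'mem : f' ∈ Λ₀ := hfixmem n f' hn1 hf'fix
    refine ⟨a, ⟨f', hf'mem⟩, ?_, hfe, hw⟩
    -- membership in 𝔮
    have hfeΛ : f = XΛ ^ a * ⟨f', hf'mem⟩ := by
      apply Subtype.ext
      push_cast [hXΛ]
      exact hfe
    have : XΛ ^ a * (⟨f', hf'mem⟩ : Λ₀) ∈ 𝔮 := by rw [← hfeΛ]; exact hfq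
    rcases hqprime.mem_or_mem this with h | h
    · exact absurd (hqprime.mem_of_pow_mem a h) hXq
    · exact h
  -- minimal Y-order of an element of 𝔮 not divisible by X
  obtain ⟨f₀, hf₀q, hf₀ne⟩ := (Submodule.ne_bot_iff 𝔮).mp h𝔮0
  have hSex : ∃ dd : ℕ, ∃ f : Λ₀, f ∈ 𝔮 ∧
      MvPowerSeries.coeff (Finsupp.single 1 dd) (f : MvPowerSeries (Fin 2) K) ≠ 0 ∧
      ∀ j < dd, MvPowerSeries.coeff (Finsupp.single 1 j) (f : MvPowerSeries (Fin 2) K) = 0 := by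
    obtain ⟨a, f', hf'q, hfe, hw⟩ := hstripq f₀ hf₀q hf₀ne
    refine ⟨Nat.find hw, f', hf'q, Nat.find_spec hw, fun j hj => ?_⟩
    have := Nat.find_min hw hj
    simpa using this
  set dmin := Nat.find hSex with hdmin
  obtain ⟨π, hπq, hπd, hπlow⟩ := Nat.find_spec hSex
  have hspan : 𝔮 = Ideal.span {π} := by
    refine le_antisymm ?_ ?_
    · intro g hg
      obtain ⟨q, r, hgeq, hrrows⟩ := wdiv_exists (π : MvPowerSeries (Fin 2) K) dmin hπlow hπd
        (g : MvPowerSeries (Fin 2) K)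
      -- Frobenius fixedness of q and r
      obtain ⟨nπ, hnπ1, hπfix⟩ := hmemfix (π : MvPowerSeries (Fin 2) K) π.2
      obtain ⟨ng, hng1, hgfix⟩ := hmemfix (g : MvPowerSeries (Fin 2) K) g.2
      set n := nπ * ng with hn
      have hn1 : 1 ≤ n := Nat.one_le_iff_ne_zero.mpr (by positivity)
      have hπfix' : Φ n (π : MvPowerSeries (Fin 2) K) = π := hfixpow nπ ng _ hπfix
      have hgfix' : Φ n (g : MvPowerSeries (Fin 2) K) = g := by
        rw [hn, Nat.mul_comm]
        exact hfixpow ng nπ _ hgfix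
      have hzero : (q - Φ n q) * (π : MvPowerSeries (Fin 2) K) + (r - Φ n r) = 0 := by
        have h1 : (g : MvPowerSeries (Fin 2) K) = Φ n q * π + Φ n r := by
          conv_lhs => rw [← hgfix', hgeq]
          rw [map_add, map_mul, hπfix']
        have h2 := hgeq
        rw [h1] at h2
        linear_combination -h2
      have hrrowsΦ : ∀ m : Fin 2 →₀ ℕ, dmin ≤ m 1 →
          MvPowerSeries.coeff m (r - Φ n r) = 0 := by
        intro m hm
        rw [map_sub, hrrows m hm, hΦcoeff, hrrows m hm, zero_pow (pow_ne_zero n hQ0), sub_zero]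
      obtain ⟨hq0, hr0⟩ := wdiv_zero (π : MvPowerSeries (Fin 2) K) dmin hπlow hπd hrrowsΦ hzero
      have hqfix : Φ n q = q := (sub_eq_zero.mp hq0).symm
      have hrfix : Φ n r = r := (sub_eq_zero.mp hr0).symm
      have hqmem : q ∈ Λ₀ := hfixmem n q hn1 hqfix
      have hrmem : r ∈ Λ₀ := hfixmem n r hn1 hrfix
      set qΛ : Λ₀ := ⟨q, hqmem⟩
      set rΛ : Λ₀ := ⟨r, hrmem⟩
      have hgQR : g = qΛ * π + rΛ := by
        apply Subtype.ext
        push_cast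
        exact hgeq
      have hrq : rΛ ∈ 𝔮 := by
        have : rΛ = g - qΛ * π := by rw [hgQR]; ring
        rw [this]
        exact Ideal.sub_mem 𝔮 hg (Ideal.mul_mem_left 𝔮 qΛ hπq)
      by_cases hr0' : rΛ = 0
      · refine Ideal.mem_span_singleton'.mpr ⟨qΛ, ?_⟩
        rw [hgQR, hr0', add_zero]
      · exfalso
        obtain ⟨a, r', hr'q, hre, hw⟩ := hstripq rΛ hrq hr0'
        -- rows ≥ dmin of r' vanish
        have hr'rows : ∀ j, dmin ≤ j →
            MvPowerSeries.coeff (Finsupp.single 1 j) (r' : MvPowerSeries (Fin 2) K) = 0 := by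
          intro j hj
          have h1 : MvPowerSeries.coeff (Finsupp.single 0 a + Finsupp.single 1 j)
              (rΛ : MvPowerSeries (Fin 2) K) = 0 := by
            apply hrrows
            simpa using hj
          rw [hre, coeff_Xpow_mul] at h1
          have hle : a ≤ (Finsupp.single (0 : Fin 2) a + Finsupp.single 1 j : Fin 2 →₀ ℕ) 0 := by simp
          rw [if_pos hle, add_tsub_cancel_left] at h1
          exact h1
        set j₁ := Nat.find hw with hj₁
        have hj₁ne : MvPowerSeries.coeff (Finsupp.single 1 j₁)
            (r' : MvPowerSeries (Fin 2) K) ≠ 0 := Nat.find_spec hw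
        have hj₁lt : j₁ < dmin := by
          by_contra h
          exact hj₁ne (hr'rows j₁ (by omega))
        have := Nat.find_min hSex hj₁lt
        exact this ⟨r', hr'q, hj₁ne, fun j hj => by simpa using Nat.find_min hw hj⟩
    · rw [Ideal.span_le, Set.singleton_subset_iff]
      exact hπq
  refine ⟨⟨algebraMap Λ₀ Λ π, ?_⟩⟩
  rw [← hPmap, hspan, Ideal.map_span, Set.image_singleton]
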